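/- Let 1 < k < n-1 with gcd(k,n) = 1. Then the stringy E-function E_st(X;q) = binom(n,k)_q · (q-1)·q^n/(q^n-1) of the cone over Gr(k,n) is a polynomial with nonnegative integer coefficients whose value at q = 1 equals C(n,k)/n. -/

import Mathlib

open Polynomial Finset

/-- Numerator of the Gaussian binomial coefficient: `∏_{i=0}^{k-1} (1 - q^{n-i})`. -/
noncomputable def gaussNum (n k : ℕ) : Polynomial ℤ :=
  ∏ i ∈ Finset.range k, (1 - X ^ (n - i))

/-- Denominator of the Gaussian binomial coefficient: `∏_{i=1}^{k} (1 - q^i)`. -/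
noncomputable def gaussDen (k : ℕ) : Polynomial ℤ :=
  ∏ i ∈ Finset.range k, (1 - X ^ (i + 1))

namespace StringyAux

/-! ### gauss product identities -/

lemma one_sub_X_pow_ne_zero (i : ℕ) : (1 - X ^ (i+1) : Polynomial ℤ) ≠ 0 := by
  intro h
  have := congrArg (fun p => Polynomial.coeff p 0) h
  simp [Polynomial.coeff_one, Polynomial.coeff_X_pow] at this

lemma gaussDen_ne_zero (k : ℕ) : gaussDen k ≠ 0 := by
  rw [gaussDen, Finset.prod_ne_zero_iff]
  exact fun i _ => one_sub_X_pow_ne_zero i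

lemma num_diag (k : ℕ) : gaussNum k k = gaussDen k := by
  rw [gaussNum, gaussDen, ← Finset.prod_range_reflect]
  apply Finset.prod_congr rfl
  intro i hi
  rw [Finset.mem_range] at hi
  congr 2
  omega

lemma num_succ_left (n k : ℕ) :
    gaussNum (n+1) (k+1) = (1 - X ^ (n+1)) * gaussNum n k := by
  rw [gaussNum, gaussNum, Finset.prod_range_succ', Nat.sub_zero, mul_comm]
  congr 1
  apply Finset.prod_congr rfl
  intro i _
  congr 2
  omega

lemma num_succ_right (n k : ℕ) :
    gaussNum n (k+1) = gaussNum n k * (1 - X ^ (n - k)) := by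
  rw [gaussNum, gaussNum, Finset.prod_range_succ]

lemma den_succ (k : ℕ) : gaussDen (k+1) = gaussDen k * (1 - X ^ (k+1)) := by
  rw [gaussDen, gaussDen, Finset.prod_range_succ]

/-! ### the multiset-indexed generating polynomial -/

def Fb (w k : ℕ) : Finset (Multiset ℕ) :=
  (Multiset.powersetCard k ((k+1) • (Multiset.range (w+1)))).toFinset

lemma mem_Fb {w k : ℕ} {m : Multiset ℕ} :
    m ∈ Fb w k ↔ Multiset.card m = k ∧ ∀ x ∈ m, x ≤ w := by
  rw [Fb, Multiset.mem_toFinset, Multiset.mem_powersetCard]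
  constructor
  · rintro ⟨hle, hcard⟩
    refine ⟨hcard, fun x hx => ?_⟩
    have := Multiset.mem_of_le hle hx
    rw [Multiset.mem_nsmul] at this
    · have := Multiset.mem_range.mp this.2
      omega
  · rintro ⟨hcard, hbd⟩
    refine ⟨?_, hcard⟩
    rw [Multiset.le_iff_count]
    intro a
    by_cases ha : a ∈ m
    · have h1 : Multiset.count a m ≤ k := hcard ▸ Multiset.count_le_card a m
      have h2 : a ∈ Multiset.range (w+1) := Multiset.mem_range.mpr (by have := hbd a ha; omega)
      rw [Multiset.count_nsmul]
      have : 1 ≤ Multiset.count a (Multiset.range (w+1)) := Multiset.one_le_count_iff_mem.mpr h2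
      nlinarith
    · simp [Multiset.count_eq_zero_of_notMem ha]

noncomputable def G (w k : ℕ) : Polynomial ℤ := ∑ m ∈ Fb w k, X ^ m.sum

lemma Fb_zero_right (w : ℕ) : Fb w 0 = {0} := by
  ext m
  simp [mem_Fb, Multiset.card_eq_zero]
  rintro rfl
  simp

lemma Fb_zero_left (k : ℕ) : Fb 0 k = {Multiset.replicate k 0} := by
  ext m
  simp only [mem_Fb, Finset.mem_singleton]
  constructor
  · rintro ⟨hc, hb⟩
    rw [Multiset.eq_replicate]
    exact ⟨hc, fun x hx => by have := hb x hx; omega⟩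
  · rintro rfl
    simp only [Multiset.card_replicate, true_and]
    exact fun x hx => by rw [Multiset.eq_of_mem_replicate hx]

lemma G_zero_right (w : ℕ) : G w 0 = 1 := by
  simp [G, Fb_zero_right]

lemma G_zero_left (k : ℕ) : G 0 k = 1 := by
  simp [G, Fb_zero_left, Multiset.sum_replicate]

lemma sum_map_pred (m : Multiset ℕ) (h : ∀ x ∈ m, 1 ≤ x) :
    (m.map (fun x => x - 1)).sum + Multiset.card m = m.sum := by
  induction m using Multiset.induction with
  | empty => simp
  | cons a s ih =>
      simp only [Multiset.map_cons, Multiset.sum_cons, Multiset.card_cons]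
      have ha : 1 ≤ a := h a (Multiset.mem_cons_self a s)
      have := ih (fun x hx => h x (Multiset.mem_cons_of_mem hx))
      omega

lemma G_pascal (w k : ℕ) :
    G (w+1) (k+1) = G (w+1) k + X ^ (k+1) * G w (k+1) := by
  classical
  have hsplit := Finset.sum_filter_add_sum_filter_not (Fb (w+1) (k+1))
    (fun m => (0:ℕ) ∈ m) (fun m => (X:Polynomial ℤ) ^ m.sum)
  have hA : ∑ m ∈ (Fb (w+1) (k+1)).filter (fun m => (0:ℕ) ∈ m), (X:Polynomial ℤ) ^ m.sum
      = G (w+1) k := by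
    rw [G]
    apply Finset.sum_nbij' (i := fun m => m.erase 0) (j := fun m => (0:ℕ) ::ₘ m)
    · intro m hm
      rw [Finset.mem_filter, mem_Fb] at hm
      obtain ⟨⟨hc, hb⟩, h0⟩ := hm
      rw [mem_Fb]
      constructor
      · rw [Multiset.card_erase_of_mem h0, hc]; rfl
      · exact fun x hx => hb x (Multiset.mem_of_mem_erase hx)
    · intro m hm
      rw [mem_Fb] at hm
      rw [Finset.mem_filter, mem_Fb]
      refine ⟨⟨by simp [hm.1], fun x hx => ?_⟩, Multiset.mem_cons_self 0 m⟩
      rcases Multiset.mem_cons.mp hx with h | h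
      · omega
      · exact hm.2 x h
    · intro m hm
      rw [Finset.mem_filter] at hm
      exact Multiset.cons_erase hm.2
    · intro m _
      exact Multiset.erase_cons_head 0 m
    · intro m hm
      rw [Finset.mem_filter] at hm
      congr 1
      conv_lhs => rw [← Multiset.cons_erase hm.2]
      simp
  have hB : ∑ m ∈ (Fb (w+1) (k+1)).filter (fun m => ¬ (0:ℕ) ∈ m), (X:Polynomial ℤ) ^ m.sum
      = X ^ (k+1) * G w (k+1) := by
    rw [G, Finset.mul_sum]
    apply Finset.sum_nbij' (i := fun m => m.map (fun x => x - 1))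
      (j := fun m => m.map (fun x => x + 1))
    · intro m hm
      rw [Finset.mem_filter, mem_Fb] at hm
      obtain ⟨⟨hc, hb⟩, h0⟩ := hm
      rw [mem_Fb]
      constructor
      · simp [hc]
      · intro x hx
        rw [Multiset.mem_map] at hx
        obtain ⟨y, hy, rfl⟩ := hx
        have h1 := hb y hy
        have h2 : y ≠ 0 := fun h => h0 (h ▸ hy)
        omega
    · intro m hm
      rw [mem_Fb] at hm
      rw [Finset.mem_filter, mem_Fb]
      refine ⟨⟨by simp [hm.1], fun x hx => ?_⟩, fun hx => ?_⟩
      · rw [Multiset.mem_map] at hx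
        obtain ⟨y, hy, rfl⟩ := hx
        have := hm.2 y hy
        omega
      · rw [Multiset.mem_map] at hx
        obtain ⟨y, _, hy⟩ := hx
        omega
    · intro m hm
      rw [Finset.mem_filter] at hm
      rw [Multiset.map_map]
      have : ∀ x ∈ m, (x - 1) + 1 = x := by
        intro x hx
        have : x ≠ 0 := fun h => hm.2 (h ▸ hx)
        omega
      calc m.map ((fun x => x + 1) ∘ (fun x => x - 1)) = m.map id := Multiset.map_congr rfl this
      _ = m := Multiset.map_id m
    · intro m _
      rw [Multiset.map_map]
      calc m.map ((fun x => x - 1) ∘ (fun x => x + 1)) = m.map id := Multiset.map_congr rfl (by simp)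
      _ = m := Multiset.map_id m
    · intro m hm
      rw [Finset.mem_filter, mem_Fb] at hm
      obtain ⟨⟨hc, _⟩, h0⟩ := hm
      rw [← pow_add]
      congr 1
      have hge : ∀ x ∈ m, 1 ≤ x := by
        intro x hx
        have : x ≠ 0 := fun h => h0 (h ▸ hx)
        omega
      have := sum_map_pred m hge
      omega
  rw [G, ← hsplit, hA, hB]

lemma G_mul_den : ∀ w k : ℕ, G w k * gaussDen k = gaussNum (w + k) k := by
  intro w
  induction w with
  | zero =>
      intro k
      rw [G_zero_left, one_mul, zero_add, num_diag]
  | succ w ihw =>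
      intro k
      induction k with
      | zero =>
          rw [G_zero_right, one_mul]
          rfl
      | succ k ihk =>
          rw [G_pascal, den_succ, add_mul, show (w+1) + (k+1) = (w+k+1) + 1 from by ring,
            num_succ_left]
          have h1 : G (w+1) k * (gaussDen k * (1 - X^(k+1)))
              = gaussNum (w+k+1) k * (1 - X^(k+1)) := by
            rw [← mul_assoc, ihk]
            congr 2
            omega
          have h2 : X ^ (k+1) * G w (k+1) * (gaussDen k * (1 - X^(k+1)))
              = X ^ (k+1) * (gaussNum (w+k+1) k * (1 - X^(w+1))) := by
            rw [mul_assoc (X^(k+1)), ← den_succ, ihw (k+1)]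
            have : gaussNum (w + (k+1)) (k+1) = gaussNum (w+k+1) k * (1 - X^(w+1)) := by
              rw [show w + (k+1) = w+k+1 from by ring, num_succ_right]
              congr 3
              omega
            rw [this]
          rw [h1, h2]
          ring

lemma G_eval_one : ∀ w k : ℕ, (G w k).eval 1 = ((w+k).choose k : ℤ) := by
  intro w
  induction w with
  | zero =>
      intro k
      simp [G_zero_left]
  | succ w ihw =>
      intro k
      induction k with
      | zero => simp [G_zero_right]
      | succ k ihk =>
          rw [G_pascal]
          simp only [Polynomial.eval_add, Polynomial.eval_mul, Polynomial.eval_pow,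
            Polynomial.eval_X, one_pow, one_mul, ihw, ihk]
          have : (w+1+(k+1)).choose (k+1) = (w+1+k).choose k + (w+(k+1)).choose (k+1) := by
            rw [show w+1+(k+1) = (w+k+1)+1 from by omega]
            rw [show w+1+k = w+k+1 from by omega, show w+(k+1) = w+k+1 from by omega]
            exact Nat.choose_succ_succ (w+k+1) k
          rw [this]
          push_cast
          ring


/-! ### coefficients of G as counts -/

lemma G_coeff (w k j : ℕ) :
    (G w k).coeff j = (((Fb w k).filter (fun m => m.sum = j)).card : ℤ) := by
  classical
  rw [G, Polynomial.finset_sum_coeff, Finset.card_filter]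
  push_cast
  apply Finset.sum_congr rfl
  intro m _
  rw [Polynomial.coeff_X_pow]
  simp [eq_comm]

lemma G_coeff_nonneg (w k j : ℕ) : 0 ≤ (G w k).coeff j := by
  rw [G_coeff]
  positivity

lemma sum_le_of_mem_Fb {w k : ℕ} {m : Multiset ℕ} (hm : m ∈ Fb w k) : m.sum ≤ k * w := by
  rw [mem_Fb] at hm
  have := Multiset.sum_le_card_nsmul m w hm.2
  rw [hm.1] at this
  simpa [smul_eq_mul] using this

lemma G_coeff_eq_zero {w k j : ℕ} (h : k * w < j) : (G w k).coeff j = 0 := by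
  rw [G_coeff]
  norm_num
  intro m hm
  have := sum_le_of_mem_Fb hm
  omega

lemma sum_map_rev {w : ℕ} (m : Multiset ℕ) (h : ∀ x ∈ m, x ≤ w) :
    (m.map (fun x => w - x)).sum + m.sum = Multiset.card m * w := by
  induction m using Multiset.induction with
  | empty => simp
  | cons a s ih =>
      simp only [Multiset.map_cons, Multiset.sum_cons, Multiset.card_cons]
      have ha : a ≤ w := h a (Multiset.mem_cons_self a s)
      have := ih (fun x hx => h x (Multiset.mem_cons_of_mem hx))
      have hcard : (Multiset.card s + 1) * w = Multiset.card s * w + w := by ring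
      omega

lemma G_coeff_symm {w k j : ℕ} (h : j ≤ k * w) :
    (G w k).coeff j = (G w k).coeff (k * w - j) := by
  classical
  rw [G_coeff, G_coeff]
  congr 1
  apply Finset.card_nbij' (i := fun m => m.map (fun x => w - x))
    (j := fun m => m.map (fun x => w - x))
  · intro m hm
    rw [Finset.mem_coe, Finset.mem_filter, mem_Fb] at hm
    obtain ⟨⟨hc, hb⟩, hs⟩ := hm
    rw [Finset.mem_coe, Finset.mem_filter, mem_Fb]
    beta_reduce
    have hrev := sum_map_rev m hb
    rw [hc] at hrev
    refine ⟨⟨by simp [hc], fun x hx => ?_⟩, ?_⟩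
    · rw [Multiset.mem_map] at hx
      obtain ⟨y, _, rfl⟩ := hx
      omega
    · omega
  · intro m hm
    rw [Finset.mem_coe, Finset.mem_filter, mem_Fb] at hm
    obtain ⟨⟨hc, hb⟩, hs⟩ := hm
    rw [Finset.mem_coe, Finset.mem_filter, mem_Fb]
    beta_reduce
    have hrev := sum_map_rev m hb
    rw [hc] at hrev
    refine ⟨⟨by simp [hc], fun x hx => ?_⟩, ?_⟩
    · rw [Multiset.mem_map] at hx
      obtain ⟨y, _, rfl⟩ := hx
      omega
    · omega
  · intro m hm
    rw [Finset.mem_coe, Finset.mem_filter, mem_Fb] at hm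
    obtain ⟨⟨hc, hb⟩, hs⟩ := hm
    beta_reduce
    rw [Multiset.map_map]
    calc m.map ((fun x => w - x) ∘ (fun x => w - x))
        = m.map id := Multiset.map_congr rfl (by intro x hx; have := hb x hx; simp; omega)
      _ = m := Multiset.map_id m
  · intro m hm
    rw [Finset.mem_coe, Finset.mem_filter, mem_Fb] at hm
    obtain ⟨⟨hc, hb⟩, hs⟩ := hm
    beta_reduce
    rw [Multiset.map_map]
    calc m.map ((fun x => w - x) ∘ (fun x => w - x))
        = m.map id := Multiset.map_congr rfl (by intro x hx; have := hb x hx; simp; omega)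
      _ = m := Multiset.map_id m



/-! ### sl2 action on multisets of naturals -/

abbrev V : Type := Multiset ℕ →₀ ℚ

noncomputable def del (m : Multiset ℕ) : V := Finsupp.single m 1

def mup (x : ℕ) (m : Multiset ℕ) : Multiset ℕ := (x+1) ::ₘ m.erase x
def mdn (x : ℕ) (m : Multiset ℕ) : Multiset ℕ := (x-1) ::ₘ m.erase x

noncomputable def eup (w : ℕ) (m : Multiset ℕ) : V :=
  (m.map (fun (x:ℕ) => (((w:ℚ) - (x:ℚ)) • del (mup x m)))).sum
noncomputable def fdn (m : Multiset ℕ) : V :=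
  (m.map (fun (x:ℕ) => ((x:ℚ) • del (mdn x m)))).sum
noncomputable def wt (w : ℕ) (m : Multiset ℕ) : ℚ :=
  2 * (m.sum : ℚ) - (Multiset.card m : ℚ) * (w : ℚ)

noncomputable def Eop (w : ℕ) : V →ₗ[ℚ] V :=
  Finsupp.lsum ℚ (fun m => LinearMap.id.smulRight (eup w m))
noncomputable def Fop : V →ₗ[ℚ] V :=
  Finsupp.lsum ℚ (fun m => LinearMap.id.smulRight (fdn m))
noncomputable def Hop (w : ℕ) : V →ₗ[ℚ] V :=
  Finsupp.lsum ℚ (fun m => LinearMap.id.smulRight (wt w m • del m))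

lemma Eop_single (w : ℕ) (m : Multiset ℕ) (c : ℚ) :
    Eop w (Finsupp.single m c) = c • eup w m := by
  rw [Eop, Finsupp.lsum_single, LinearMap.smulRight_apply, LinearMap.id_apply]

lemma Fop_single (m : Multiset ℕ) (c : ℚ) :
    Fop (Finsupp.single m c) = c • fdn m := by
  rw [Fop, Finsupp.lsum_single, LinearMap.smulRight_apply, LinearMap.id_apply]

lemma Hop_single (w : ℕ) (m : Multiset ℕ) (c : ℚ) :
    Hop w (Finsupp.single m c) = c • (wt w m • del m) := by
  rw [Hop, Finsupp.lsum_single, LinearMap.smulRight_apply, LinearMap.id_apply]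

lemma Eop_del (w : ℕ) (m : Multiset ℕ) : Eop w (del m) = eup w m := by
  rw [del, Eop_single, one_smul]

lemma Fop_del (m : Multiset ℕ) : Fop (del m) = fdn m := by
  rw [del, Fop_single, one_smul]

/-- multiset erase of a cons, when the erased element is a member of the tail -/
lemma erase_cons_of_mem {a x : ℕ} {s : Multiset ℕ} (h : x ∈ s) :
    (a ::ₘ s).erase x = a ::ₘ s.erase x := by
  by_cases hxa : x = a
  · subst hxa
    rw [Multiset.erase_cons_head, Multiset.cons_erase h]
  · exact Multiset.erase_cons_tail s (fun hh => hxa hh.symm)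

/-- double sum over ordered pairs of distinct positions is symmetric -/
lemma sum_erase_comm {M : Type*} [AddCommMonoid M] (m : Multiset ℕ) (t : ℕ → ℕ → M) :
    (m.map (fun x => ((m.erase x).map (t x)).sum)).sum
      = (m.map (fun y => ((m.erase y).map (fun x => t x y)).sum)).sum := by
  induction m using Multiset.induction with
  | empty => simp
  | cons a s ih =>
      simp only [Multiset.map_cons, Multiset.sum_cons, Multiset.erase_cons_head]
      have hL : (s.map (fun x => (((a ::ₘ s).erase x).map (t x)).sum)).sum
          = (s.map (fun x => t x a)).sum + (s.map (fun x => ((s.erase x).map (t x)).sum)).sum := by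
        rw [← Multiset.sum_map_add]
        apply congrArg
        apply Multiset.map_congr rfl
        intro x hx
        rw [erase_cons_of_mem hx, Multiset.map_cons, Multiset.sum_cons]
      have hR : (s.map (fun y => (((a ::ₘ s).erase y).map (fun x => t x y)).sum)).sum
          = (s.map (fun y => t a y)).sum + (s.map (fun y => ((s.erase y).map (fun x => t x y)).sum)).sum := by
        rw [← Multiset.sum_map_add]
        apply congrArg
        apply Multiset.map_congr rfl
        intro y hy
        rw [erase_cons_of_mem hy, Multiset.map_cons, Multiset.sum_cons]
      rw [hL, hR, ih]
      abel

lemma smul_map_sum (c : ℚ) (l : Multiset ℕ) (f : ℕ → V) :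
    c • (l.map f).sum = (l.map (fun y => c • f y)).sum := by
  rw [Multiset.smul_sum, Multiset.map_map]
  rfl

lemma sum_map_collect (m : Multiset ℕ) (c : ℕ → ℚ) (v : V) :
    (m.map (fun x => c x • v)).sum = ((m.map c).sum) • v := by
  induction m using Multiset.induction with
  | empty => simp
  | cons a s ih => simp [ih, add_smul]

lemma sum_map_lin (w : ℕ) (m : Multiset ℕ) :
    (m.map (fun (x:ℕ) => 2*(x:ℚ) - (w:ℚ))).sum = 2*(m.sum:ℚ) - (Multiset.card m : ℚ)*(w:ℚ) := by
  induction m using Multiset.induction with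
  | empty => simp
  | cons a s ih =>
      simp only [Multiset.map_cons, Multiset.sum_cons, Multiset.card_cons]
      rw [ih]
      push_cast
      ring


lemma Eop_fdn (w : ℕ) (m : Multiset ℕ) :
    Eop w (fdn m) = (m.map (fun (x:ℕ) => (x:ℚ) • eup w (mdn x m))).sum := by
  rw [fdn, map_multiset_sum, Multiset.map_map]
  apply congrArg
  apply Multiset.map_congr rfl
  intro x _
  simp only [Function.comp_apply, map_smul, Eop_del]

lemma Fop_eup (w : ℕ) (m : Multiset ℕ) :
    Fop (eup w m) = (m.map (fun (y:ℕ) => ((w:ℚ)-(y:ℚ)) • fdn (mup y m))).sum := by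
  rw [eup, map_multiset_sum, Multiset.map_map]
  apply congrArg
  apply Multiset.map_congr rfl
  intro x _
  simp only [Function.comp_apply, map_smul, Fop_del]

lemma mup_pred_mdn {x : ℕ} {m : Multiset ℕ} (hx : x ∈ m) (hx1 : 1 ≤ x) :
    mup (x-1) (mdn x m) = m := by
  show ((x-1)+1) ::ₘ ((x-1) ::ₘ m.erase x).erase (x-1) = m
  rw [Multiset.erase_cons_head, show (x-1)+1 = x from by omega]
  exact Multiset.cons_erase hx

lemma mdn_succ_mup {y : ℕ} {m : Multiset ℕ} (hy : y ∈ m) :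
    mdn (y+1) (mup y m) = m := by
  show ((y+1)-1) ::ₘ ((y+1) ::ₘ m.erase y).erase (y+1) = m
  rw [Multiset.erase_cons_head, show (y+1)-1 = y from rfl]
  exact Multiset.cons_erase hy

lemma eup_mdn (w x : ℕ) (m : Multiset ℕ) (hx : x ∈ m) (hx1 : 1 ≤ x) :
    eup w (mdn x m) = ((w:ℚ) - (x:ℚ) + 1) • del m
      + ((m.erase x).map (fun (y:ℕ) => ((w:ℚ)-(y:ℚ)) • del (mup y (mdn x m)))).sum := by
  rw [eup]
  show (((x-1) ::ₘ m.erase x).map (fun (y:ℕ) => ((w:ℚ)-(y:ℚ)) • del (mup y (mdn x m)))).sum = _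
  rw [Multiset.map_cons, Multiset.sum_cons]
  congr 1
  rw [mup_pred_mdn hx hx1]
  congr 1
  rw [Nat.cast_sub hx1]
  push_cast
  ring

lemma fdn_mup (y : ℕ) (m : Multiset ℕ) (hy : y ∈ m) :
    fdn (mup y m) = ((y:ℚ)+1) • del m
      + ((m.erase y).map (fun (x:ℕ) => (x:ℚ) • del (mdn x (mup y m)))).sum := by
  rw [fdn]
  show (((y+1) ::ₘ m.erase y).map (fun (x:ℕ) => (x:ℚ) • del (mdn x (mup y m)))).sum = _
  rw [Multiset.map_cons, Multiset.sum_cons]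
  congr 1
  rw [mdn_succ_mup hy]
  congr 1
  push_cast
  ring

lemma mdn_mup_eq_mup_mdn {m : Multiset ℕ} {x y : ℕ} (hx1 : 1 ≤ x) (hy : y ∈ m)
    (hx : x ∈ m.erase y) : mdn x (mup y m) = mup y (mdn x m) := by
  by_cases hxy : x = y + 1
  · subst hxy
    rw [mdn_succ_mup hy]
    have hxm : y + 1 ∈ m := Multiset.mem_of_mem_erase hx
    show m = (y+1) ::ₘ (((y+1)-1) ::ₘ m.erase (y+1)).erase y
    rw [show (y+1)-1 = y from rfl, Multiset.erase_cons_head]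
    exact (Multiset.cons_erase hxm).symm
  · show (x-1) ::ₘ ((y+1) ::ₘ m.erase y).erase x = (y+1) ::ₘ ((x-1) ::ₘ m.erase x).erase y
    rw [Multiset.erase_cons_tail _ (fun h => hxy h.symm),
      Multiset.erase_cons_tail _ (fun h => hxy (by omega)),
      Multiset.erase_comm, Multiset.cons_swap]

lemma sum_map_sub' (m : Multiset ℕ) (f g : ℕ → ℚ) :
    (m.map (fun x => f x - g x)).sum = (m.map f).sum - (m.map g).sum := by
  induction m using Multiset.induction with
  | empty => simp
  | cons a s ih =>
      simp only [Multiset.map_cons, Multiset.sum_cons, ih]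
      ring

/-- The sl2 commutator relation `[E,F] = H` on basis vectors. -/
lemma core (w : ℕ) (m : Multiset ℕ) :
    Eop w (fdn m) = wt w m • del m + Fop (eup w m) := by
  have hE : Eop w (fdn m)
      = (m.map (fun (x:ℕ) => ((x:ℚ)*((w:ℚ)-(x:ℚ)+1)) • del m)).sum
        + (m.map (fun (x:ℕ) =>
            ((m.erase x).map (fun (y:ℕ) => ((x:ℚ)*((w:ℚ)-(y:ℚ))) • del (mup y (mdn x m)))).sum)).sum := by
    rw [Eop_fdn, ← Multiset.sum_map_add]
    apply congrArg
    apply Multiset.map_congr rfl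
    intro x hx
    rcases Nat.eq_zero_or_pos x with h0 | h1
    · subst h0
      simp
    · rw [eup_mdn w x m hx h1, smul_add, smul_smul, smul_map_sum]
      congr 1
      apply congrArg
      apply Multiset.map_congr rfl
      intro y _
      rw [smul_smul]
  have hF : Fop (eup w m)
      = (m.map (fun (y:ℕ) => (((w:ℚ)-(y:ℚ))*((y:ℚ)+1)) • del m)).sum
        + (m.map (fun (y:ℕ) =>
            ((m.erase y).map (fun (x:ℕ) => ((x:ℚ)*((w:ℚ)-(y:ℚ))) • del (mup y (mdn x m)))).sum)).sum := by
    rw [Fop_eup, ← Multiset.sum_map_add]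
    apply congrArg
    apply Multiset.map_congr rfl
    intro y hy
    rw [fdn_mup y m hy, smul_add, smul_smul, smul_map_sum]
    congr 1
    apply congrArg
    apply Multiset.map_congr rfl
    intro x hx
    rw [smul_smul]
    rcases Nat.eq_zero_or_pos x with h0 | h1
    · subst h0
      simp
    · rw [mdn_mup_eq_mup_mdn h1 hy hx, mul_comm ((w:ℚ)-(y:ℚ)) (x:ℚ)]
  have hcross := sum_erase_comm m
    (fun x y => ((x:ℚ)*((w:ℚ)-(y:ℚ))) • del (mup y (mdn x m)))
  rw [hE, hF]
  rw [← hcross]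
  have hdiag : (m.map (fun (x:ℕ) => ((x:ℚ)*((w:ℚ)-(x:ℚ)+1)) • del m)).sum
      - (m.map (fun (y:ℕ) => (((w:ℚ)-(y:ℚ))*((y:ℚ)+1)) • del m)).sum = wt w m • del m := by
    rw [sum_map_collect, sum_map_collect, ← sub_smul, ← sum_map_sub']
    congr 1
    rw [wt, ← sum_map_lin w m]
    apply congrArg
    apply Multiset.map_congr rfl
    intro x _
    ring
  rw [← hdiag]
  abel

/-- `[E,F] = H` as operators. -/
lemma comm_ops (w : ℕ) (v : V) :
    Eop w (Fop v) = Hop w v + Fop (Eop w v) := by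
  have : (Eop w) ∘ₗ Fop = Hop w + Fop ∘ₗ (Eop w) := by
    apply Finsupp.lhom_ext
    intro m b
    simp only [LinearMap.comp_apply, LinearMap.add_apply]
    rw [Fop_single, Eop_single, Hop_single, map_smul, map_smul, core]
    rw [smul_add]
  exact congrFun (congrArg (fun (φ : V →ₗ[ℚ] V) => φ.toFun) this) v


/-! ### eigenvectors and supports -/

lemma Hop_eigen (w : ℕ) {v : V} {μ : ℚ} (h : ∀ m ∈ v.support, wt w m = μ) :
    Hop w v = μ • v := by
  conv_lhs => rw [← Finsupp.sum_single v]
  rw [map_finsuppSum]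
  conv_rhs => rw [← Finsupp.sum_single v, Finsupp.smul_sum]
  apply Finsupp.sum_congr
  intro m hm
  rw [Hop_single, h m hm, del, Finsupp.smul_single, Finsupp.smul_single, Finsupp.smul_single]
  congr 1
  simp [smul_eq_mul]
  ring

lemma mem_support_msum {l : Multiset V} {p : Multiset ℕ} (hp : p ∈ l.sum.support) :
    ∃ φ ∈ l, p ∈ φ.support := by
  induction l using Multiset.induction with
  | empty => simp at hp
  | cons a s ih =>
      rw [Multiset.sum_cons] at hp
      rcases Finset.mem_union.mp (Finsupp.support_add hp) with h | h
      · exact ⟨a, Multiset.mem_cons_self a s, h⟩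
      · obtain ⟨φ, hφ, hpφ⟩ := ih h
        exact ⟨φ, Multiset.mem_cons_of_mem hφ, hpφ⟩

lemma Fop_support_aux {v : V} {p : Multiset ℕ} (hp : p ∈ (Fop v).support) :
    ∃ m ∈ v.support, p ∈ (fdn m).support := by
  rw [Fop, Finsupp.lsum_apply] at hp
  obtain ⟨m, hm, hpm⟩ := Finset.mem_biUnion.mp (Finsupp.support_sum hp)
  refine ⟨m, hm, ?_⟩
  have he : ((LinearMap.id : ℚ →ₗ[ℚ] ℚ).smulRight (fdn m)) (v m) = v m • fdn m := rfl
  rw [he] at hpm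
  exact Finsupp.support_smul hpm

lemma Eop_support_aux {w : ℕ} {v : V} {p : Multiset ℕ} (hp : p ∈ (Eop w v).support) :
    ∃ m ∈ v.support, p ∈ (eup w m).support := by
  rw [Eop, Finsupp.lsum_apply] at hp
  obtain ⟨m, hm, hpm⟩ := Finset.mem_biUnion.mp (Finsupp.support_sum hp)
  refine ⟨m, hm, ?_⟩
  have he : ((LinearMap.id : ℚ →ₗ[ℚ] ℚ).smulRight (eup w m)) (v m) = v m • eup w m := rfl
  rw [he] at hpm
  exact Finsupp.support_smul hpm

lemma fdn_support {m p : Multiset ℕ} (hp : p ∈ (fdn m).support) :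
    ∃ x ∈ m, 1 ≤ x ∧ p = mdn x m := by
  rw [fdn] at hp
  obtain ⟨φ, hφ, hpφ⟩ := mem_support_msum hp
  rw [Multiset.mem_map] at hφ
  obtain ⟨x, hx, rfl⟩ := hφ
  rcases Nat.eq_zero_or_pos x with h0 | h1
  · subst h0
    simp at hpφ
  · have h2 := Finsupp.support_smul hpφ
    rw [del] at h2
    exact ⟨x, hx, h1, Finset.mem_singleton.mp (Finsupp.support_single_subset h2)⟩

lemma eup_support {w : ℕ} {m p : Multiset ℕ} (hp : p ∈ (eup w m).support) :
    ∃ x ∈ m, (w:ℚ) - (x:ℚ) ≠ 0 ∧ p = mup x m := by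
  rw [eup] at hp
  obtain ⟨φ, hφ, hpφ⟩ := mem_support_msum hp
  rw [Multiset.mem_map] at hφ
  obtain ⟨x, hx, rfl⟩ := hφ
  by_cases h0 : (w:ℚ) - (x:ℚ) = 0
  · rw [h0, zero_smul] at hpφ
    simp at hpφ
  · have h2 := Finsupp.support_smul hpφ
    rw [del] at h2
    exact ⟨x, hx, h0, Finset.mem_singleton.mp (Finsupp.support_single_subset h2)⟩

lemma card_sum_mdn {x : ℕ} {m : Multiset ℕ} (hx : x ∈ m) (hx1 : 1 ≤ x) :
    Multiset.card (mdn x m) = Multiset.card m ∧ (mdn x m).sum + 1 = m.sum := by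
  have hcardpos : 0 < Multiset.card m := Multiset.card_pos_iff_exists_mem.mpr ⟨x, hx⟩
  have hsum : x + (m.erase x).sum = m.sum := by
    conv_rhs => rw [← Multiset.cons_erase hx]
    rw [Multiset.sum_cons]
  constructor
  · rw [mdn, Multiset.card_cons, Multiset.card_erase_of_mem hx, Nat.pred_eq_sub_one]
    omega
  · rw [mdn, Multiset.sum_cons]
    omega

lemma card_sum_mup {x : ℕ} {m : Multiset ℕ} (hx : x ∈ m) :
    Multiset.card (mup x m) = Multiset.card m ∧ (mup x m).sum = m.sum + 1 := by
  have hcardpos : 0 < Multiset.card m := Multiset.card_pos_iff_exists_mem.mpr ⟨x, hx⟩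
  have hsum : x + (m.erase x).sum = m.sum := by
    conv_rhs => rw [← Multiset.cons_erase hx]
    rw [Multiset.sum_cons]
  constructor
  · rw [mup, Multiset.card_cons, Multiset.card_erase_of_mem hx, Nat.pred_eq_sub_one]
    omega
  · rw [mup, Multiset.sum_cons]
    omega

/-- support condition: all multisets in the support have card `k` and sum `j` -/
def OK (k j : ℕ) (v : V) : Prop := ∀ m ∈ v.support, Multiset.card m = k ∧ m.sum = j

lemma Fpow_OK {k j : ℕ} {v : V} (h : OK k j v) :
    ∀ t, ∀ p ∈ ((Fop ^ t) v).support, Multiset.card p = k ∧ p.sum + t = j := by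
  intro t
  induction t with
  | zero =>
      intro p hp
      rw [pow_zero, Module.End.one_apply] at hp
      have := h p hp
      omega
  | succ t ih =>
      intro p hp
      rw [pow_succ', Module.End.mul_apply] at hp
      obtain ⟨m, hm, hpf⟩ := Fop_support_aux hp
      obtain ⟨x, hx, hx1, rfl⟩ := fdn_support hpf
      obtain ⟨hc, hs⟩ := card_sum_mdn hx hx1
      obtain ⟨hc', hs'⟩ := ih m hm
      omega


lemma Epow (w k j : ℕ) {v : V} (hOK : OK k j v) (hE : Eop w v = 0) :
    ∀ t : ℕ, Eop w ((Fop ^ (t+1)) v)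
      = (((t:ℚ)+1) * ((2*(j:ℚ) - (k:ℚ)*(w:ℚ)) - (t:ℚ))) • ((Fop ^ t) v) := by
  have heig : ∀ t : ℕ, Hop w ((Fop ^ t) v)
      = ((2*(j:ℚ) - (k:ℚ)*(w:ℚ)) - 2*(t:ℚ)) • ((Fop ^ t) v) := by
    intro t
    apply Hop_eigen
    intro m hm
    obtain ⟨hc, hs⟩ := Fpow_OK hOK t m hm
    rw [wt, hc]
    have h9 : (m.sum : ℚ) + (t:ℚ) = (j:ℚ) := by exact_mod_cast hs
    have : (m.sum : ℚ) = (j:ℚ) - (t:ℚ) := by linarith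
    rw [this]
    ring
  intro t
  induction t with
  | zero =>
      rw [pow_one, pow_zero, Module.End.one_apply, comm_ops, hE, map_zero, add_zero]
      have := heig 0
      rw [pow_zero, Module.End.one_apply] at this
      rw [this]
      congr 1
      ring
  | succ t ih =>
      have hstep : (Fop ^ (t+1+1)) v = Fop ((Fop ^ (t+1)) v) := by
        rw [pow_succ', Module.End.mul_apply]
      rw [hstep, comm_ops, ih, map_smul, heig (t+1)]
      have hstep' : Fop ((Fop ^ t) v) = (Fop ^ (t+1)) v := by
        rw [pow_succ', Module.End.mul_apply]
      rw [hstep', ← add_smul]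
      congr 1
      push_cast
      ring

lemma sl2_inj (w k j : ℕ) (hkw : 2*j < k*w) {v : V} (hOK : OK k j v)
    (hE : Eop w v = 0) : v = 0 := by
  classical
  by_contra hv
  have hlam : (2*(j:ℚ) - (k:ℚ)*(w:ℚ)) < 0 := by
    have : ((2*j : ℕ):ℚ) < ((k*w : ℕ):ℚ) := by exact_mod_cast hkw
    push_cast at this
    linarith
  have hzero : (Fop ^ (j+1)) v = 0 := by
    apply Finsupp.support_eq_empty.mp
    rw [Finset.eq_empty_iff_forall_notMem]
    intro p hp
    have := Fpow_OK hOK (j+1) p hp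
    omega
  have hex : ∃ t, (Fop ^ t) v = 0 := ⟨j+1, hzero⟩
  set t0 := Nat.find hex with ht0
  have ht0spec : (Fop ^ t0) v = 0 := Nat.find_spec hex
  have ht0pos : 1 ≤ t0 := by
    rcases Nat.eq_zero_or_pos t0 with h | h
    · exfalso
      apply hv
      have := ht0spec
      rw [h, pow_zero, Module.End.one_apply] at this
      exact this
    · exact h
  have hprev : (Fop ^ (t0 - 1)) v ≠ 0 := Nat.find_min hex (by omega)
  have hkey := Epow w k j hOK hE (t0 - 1)
  rw [show t0 - 1 + 1 = t0 from by omega, ht0spec, map_zero] at hkey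
  have hcoef : (((t0-1 : ℕ):ℚ)+1) * ((2*(j:ℚ) - (k:ℚ)*(w:ℚ)) - ((t0-1:ℕ):ℚ)) ≠ 0 := by
    apply mul_ne_zero
    · positivity
    · have h1 : (0:ℚ) ≤ ((t0-1:ℕ):ℚ) := by positivity
      intro h
      nlinarith
  rcases smul_eq_zero.mp hkey.symm with h | h
  · exact hcoef h
  · exact hprev h


lemma card_mono (w k j : ℕ) (h : 2*j < k*w) :
    ((Fb w k).filter (fun m => m.sum = j)).card
      ≤ ((Fb w k).filter (fun m => m.sum = j+1)).card := by
  classical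
  set A := (Fb w k).filter (fun m => m.sum = j) with hA
  set B := (Fb w k).filter (fun m => m.sum = j+1) with hB
  let ι : (↥A → ℚ) →ₗ[ℚ] V :=
    { toFun := fun f => ∑ s : ↥A, f s • del (s : Multiset ℕ)
      map_add' := by
        intro f g
        simp [add_smul, Finset.sum_add_distrib]
      map_smul' := by
        intro c f
        simp [Finset.smul_sum, smul_smul] }
  have hι_apply : ∀ (f : ↥A → ℚ) (s : ↥A), (ι f) (s : Multiset ℕ) = f s := by
    intro f s
    show (∑ s' : ↥A, f s' • del (s' : Multiset ℕ)) (s : Multiset ℕ) = f s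
    rw [Finsupp.finset_sum_apply]
    rw [Finset.sum_eq_single s]
    · rw [Finsupp.smul_apply, del, Finsupp.single_apply]
      simp
    · intro s' _ hne
      rw [Finsupp.smul_apply, del, Finsupp.single_apply, if_neg, smul_zero]
      intro hval
      exact hne (Subtype.ext hval)
    · intro hs
      exact absurd (Finset.mem_univ s) hs
  have hι_supp : ∀ (f : ↥A → ℚ) (p : Multiset ℕ), p ∈ (ι f).support → p ∈ A := by
    intro f p hp
    have h1 : p ∈ Finset.univ.biUnion (fun (s : ↥A) => (f s • del (s : Multiset ℕ)).support) :=
      Finsupp.support_finset_sum hp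
    obtain ⟨s, _, hps⟩ := Finset.mem_biUnion.mp h1
    have h2 := Finsupp.support_smul hps
    rw [del] at h2
    have h3 := Finset.mem_singleton.mp (Finsupp.support_single_subset h2)
    rw [h3]
    exact s.2
  let Ψ : (↥A → ℚ) →ₗ[ℚ] (↥B → ℚ) :=
    { toFun := fun f => fun t => (Eop w (ι f)) (t : Multiset ℕ)
      map_add' := by
        intro f g
        funext t
        simp
      map_smul' := by
        intro c f
        funext t
        simp }
  have hinj : Function.Injective Ψ := by
    rw [injective_iff_map_eq_zero]
    intro f hf
    have hOK : OK k j (ι f) := by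
      intro m hm
      have h4 := hι_supp f m hm
      rw [hA, Finset.mem_filter, mem_Fb] at h4
      exact ⟨h4.1.1, h4.2⟩
    have hbd : ∀ m ∈ (ι f).support, ∀ x ∈ m, x ≤ w := by
      intro m hm
      have h4 := hι_supp f m hm
      rw [hA, Finset.mem_filter, mem_Fb] at h4
      exact h4.1.2
    have hE0 : Eop w (ι f) = 0 := by
      ext p
      rw [Finsupp.coe_zero, Pi.zero_apply]
      by_cases hp : p ∈ (Eop w (ι f)).support
      · obtain ⟨m, hm, hpe⟩ := Eop_support_aux hp
        obtain ⟨x, hx, hwx, rfl⟩ := eup_support hpe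
        obtain ⟨hck, hsj⟩ := hOK m hm
        have hbdm := hbd m hm
        have hxw : x < w := by
          have h1 : x ≤ w := hbdm x hx
          rcases lt_or_eq_of_le h1 with h' | h'
          · exact h'
          · exact absurd (by rw [h', sub_self]) hwx
        obtain ⟨hc', hs'⟩ := card_sum_mup hx
        have hmem : mup x m ∈ B := by
          rw [hB, Finset.mem_filter, mem_Fb]
          refine ⟨⟨by omega, ?_⟩, by omega⟩
          intro y hy
          rcases Multiset.mem_cons.mp hy with h' | h'
          · omega
          · exact hbdm y (Multiset.mem_of_mem_erase h')
        have : (Eop w (ι f)) (mup x m) = Ψ f ⟨mup x m, hmem⟩ := rfl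
        rw [this, hf]
        rfl
      · exact Finsupp.notMem_support_iff.mp hp
    have hv0 : ι f = 0 := sl2_inj w k j h hOK hE0
    funext s
    have := hι_apply f s
    rw [hv0] at this
    simpa using this.symm
  have hrank := LinearMap.finrank_le_finrank_of_injective hinj
  rw [Module.finrank_pi ℚ, Module.finrank_pi ℚ, Fintype.card_coe, Fintype.card_coe] at hrank
  exact hrank

lemma G_mono {w k j : ℕ} (h : 2 * j < k * w) :
    (G w k).coeff j ≤ (G w k).coeff (j+1) := by
  rw [G_coeff, G_coeff]
  exact_mod_cast card_mono w k j h

lemma G_anti {w k j : ℕ} (h : k * w ≤ 2 * j) :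
    (G w k).coeff (j+1) ≤ (G w k).coeff j := by
  by_cases hj : k * w < j + 1
  · rw [G_coeff_eq_zero hj]
    exact G_coeff_nonneg w k j
  · have hj' : j < k * w := by omega
    rw [G_coeff_symm (le_of_lt hj'), G_coeff_symm (by omega : j + 1 ≤ k * w)]
    have := G_mono (w := w) (k := k) (j := k * w - j - 1) (by omega)
    have e1 : k * w - (j+1) = k * w - j - 1 := by omega
    have e2 : k * w - j - 1 + 1 = k * w - j := by omega
    rw [e1, ← e2]
    exact this

/-! ### the subset generating polynomial -/

noncomputable def As (n k : ℕ) : Polynomial ℤ :=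
  ∑ S ∈ Finset.powersetCard k (Finset.range n), X ^ (∑ x ∈ S, x)

def stair (k : ℕ) : ℕ := ∑ i ∈ Finset.range k, i

lemma stair_succ (k : ℕ) : stair (k+1) = stair k + k := by
  rw [stair, stair, Finset.sum_range_succ]

lemma As_zero (n : ℕ) : As n 0 = 1 := by
  simp [As]

lemma As_full (n : ℕ) : As n n = X ^ (stair n) := by
  have h := Finset.powersetCard_self (Finset.range n)
  rw [Finset.card_range] at h
  rw [As, h, Finset.sum_singleton, stair]

lemma As_pascal (n k : ℕ) : As (n+1) (k+1) = As n (k+1) + X ^ n * As n k := by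
  classical
  rw [As, As, As, Finset.range_add_one,
    Finset.powersetCard_succ_insert Finset.notMem_range_self]
  rw [Finset.sum_union]
  · congr 1
    rw [Finset.sum_image, Finset.mul_sum]
    · apply Finset.sum_congr rfl
      intro S hS
      rw [Finset.mem_powersetCard] at hS
      have hn : n ∉ S := fun hc => absurd (hS.1 hc) (by simp)
      rw [Finset.sum_insert hn, ← pow_add]
    · intro S hS T hT hST
      rw [Finset.mem_coe, Finset.mem_powersetCard] at hS hT
      have hnS : n ∉ S := fun hc => absurd (hS.1 hc) (by simp)
      have hnT : n ∉ T := fun hc => absurd (hT.1 hc) (by simp)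
      have := congrArg (fun (U : Finset ℕ) => U.erase n) hST
      simpa [Finset.erase_insert hnS, Finset.erase_insert hnT] using this
  · rw [Finset.disjoint_left]
    intro S hS hS'
    rw [Finset.mem_powersetCard] at hS
    obtain ⟨T, hT, rfl⟩ := Finset.mem_image.mp hS'
    have : n ∈ Finset.range n := hS.1 (Finset.mem_insert_self n T)
    simp at this

lemma As_mul_den : ∀ n k : ℕ, k ≤ n → As n k * gaussDen k = X ^ (stair k) * gaussNum n k := by
  intro n
  induction n with
  | zero =>
      intro k hk
      interval_cases k
      simp [As_zero, gaussDen, gaussNum, stair]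
  | succ n ihn =>
      intro k hk
      match k with
      | 0 => simp [As_zero, gaussDen, gaussNum, stair]
      | (k'+1) =>
        rcases Nat.lt_or_ge k' n with hlt | hge
        · have hk'n : k' + 1 ≤ n := hlt
          rw [As_pascal, add_mul, den_succ, ← mul_assoc (X ^ n * As n k'),
            mul_assoc (X^n), ihn k' (by omega)]
          rw [show As n (k'+1) * (gaussDen k' * (1 - X^(k'+1)))
              = (As n (k'+1) * gaussDen (k'+1)) from by rw [den_succ]]
          rw [ihn (k'+1) hk'n]
          rw [num_succ_left, num_succ_right, stair_succ]
          obtain ⟨d, rfl⟩ : ∃ d, n = k' + d := ⟨n - k', by omega⟩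
          rw [show k' + d - k' = d from by omega]
          ring
        · have hk'' : k' = n := by omega
          subst hk''
          rw [As_full, num_diag]

/-! ### rotation divisibility -/

lemma dvd_X_pow_sub_X_pow_aux {n a b : ℕ} (hle : b ≤ a) (h : b ≡ a [MOD n]) :
    ((X:Polynomial ℤ)^n - 1) ∣ (X^a - X^b) := by
  obtain ⟨t, ht⟩ := (Nat.modEq_iff_dvd' hle).mp h
  have ha : a = b + n*t := by omega
  have hcalc : (X:Polynomial ℤ)^a - X^b = X^b * ((X^n)^t - 1) := by
    rw [ha, pow_add, pow_mul]
    ring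
  rw [hcalc]
  apply Dvd.dvd.mul_left
  have := sub_dvd_pow_sub_pow ((X:Polynomial ℤ)^n) 1 t
  simpa using this

lemma dvd_X_pow_sub_X_pow {n a b : ℕ} (h : a ≡ b [MOD n]) :
    ((X:Polynomial ℤ)^n - 1) ∣ (X^a - X^b) := by
  rcases le_total b a with hle | hle
  · exact dvd_X_pow_sub_X_pow_aux hle h.symm
  · have := dvd_X_pow_sub_X_pow_aux hle h
    rw [← dvd_neg] at this
    simpa using this

lemma rot_dvd {n k : ℕ} (hn : 0 < n) (hcop : Nat.gcd k n = 1) :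
    ((X:Polynomial ℤ)^n - 1) ∣ As n k * (X - 1) := by
  classical
  haveI : NeZero n := ⟨by omega⟩
  set U := ZMod.unitOfCoprime k hcop with hU
  set u0 := ((U⁻¹ : (ZMod n)ˣ) : ZMod n).val with hu0
  have hku : ((k * u0 : ℕ) : ZMod n) = ((1:ℕ) : ZMod n) := by
    push_cast
    rw [hu0, ZMod.natCast_val, ZMod.cast_id]
    have h1 : ((U : ZMod n)) = (k : ZMod n) := ZMod.coe_unitOfCoprime k hcop
    rw [← h1]
    exact U.mul_inv
  have hmod : k * u0 ≡ 1 [MOD n] := (ZMod.natCast_eq_natCast_iff _ _ _).mp hku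
  have hginv : ∀ x, x < n → ((x + u0) % n + (n - u0 % n)) % n = x := by
    intro x hx
    have h1 : ((x + u0) % n + (n - u0 % n)) % n = ((x + u0) + (n - u0 % n)) % n :=
      Nat.ModEq.add_right _ (Nat.mod_modEq _ _)
    have h2 := Nat.mod_add_div u0 n
    have hrlt : u0 % n < n := Nat.mod_lt _ hn
    have h3 : n * (u0 / n + 1) = n * (u0 / n) + n := by ring
    have e : x + u0 + (n - u0 % n) = x + n * (u0 / n + 1) := by omega
    rw [h1, e, Nat.add_mul_mod_self_left, Nat.mod_eq_of_lt hx]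
  have hIO : ∀ S, S ∈ Finset.powersetCard k (Finset.range n) →
      ∀ x ∈ S, ∀ y ∈ S, (x + u0) % n = (y + u0) % n → x = y := by
    intro S hS x hx y hy hxy
    rw [Finset.mem_powersetCard] at hS
    have hxn : x < n := Finset.mem_range.mp (hS.1 hx)
    have hyn : y < n := Finset.mem_range.mp (hS.1 hy)
    rw [← hginv x hxn, ← hginv y hyn, hxy]
  have hmem : ∀ S ∈ Finset.powersetCard k (Finset.range n),
      S.image (fun x => (x + u0) % n) ∈ Finset.powersetCard k (Finset.range n) := by
    intro S hS
    have hIO' := hIO S hS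
    rw [Finset.mem_powersetCard] at hS ⊢
    constructor
    · intro y hy
      obtain ⟨x, _, rfl⟩ := Finset.mem_image.mp hy
      exact Finset.mem_range.mpr (Nat.mod_lt _ hn)
    · rw [Finset.card_image_of_injOn (fun x hx y hy => hIO' x hx y hy), hS.2]
  have hrecov : ∀ W ∈ Finset.powersetCard k (Finset.range n),
      (W.image (fun x => (x + u0) % n)).image (fun x => (x + (n - u0 % n)) % n) = W := by
    intro W hW
    rw [Finset.mem_powersetCard] at hW
    rw [Finset.image_image]
    have h3 : ∀ x ∈ W, ((fun x => (x + (n - u0 % n)) % n) ∘ (fun x => (x + u0) % n)) x = id x := by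
      intro x hxW
      exact hginv x (Finset.mem_range.mp (hW.1 hxW))
    rw [Finset.image_congr h3, Finset.image_id]
  have hinj2 : ∀ S ∈ Finset.powersetCard k (Finset.range n),
      ∀ T ∈ Finset.powersetCard k (Finset.range n),
      S.image (fun x => (x + u0) % n) = T.image (fun x => (x + u0) % n) → S = T := by
    intro S hS T hT hST
    rw [← hrecov S hS, ← hrecov T hT, hST]
  have himage : (Finset.powersetCard k (Finset.range n)).image
        (fun S => S.image (fun x => (x + u0) % n))
      = Finset.powersetCard k (Finset.range n) := by
    apply Finset.eq_of_subset_of_card_le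
    · intro T hT
      obtain ⟨S, hS, rfl⟩ := Finset.mem_image.mp hT
      exact hmem S hS
    · rw [Finset.card_image_of_injOn (fun S hS T hT => hinj2 S hS T hT)]
  have hAs2 : As n k = ∑ S ∈ Finset.powersetCard k (Finset.range n),
      X ^ (∑ x ∈ S.image (fun x => (x + u0) % n), x) := by
    conv_lhs => rw [As, ← himage]
    rw [Finset.sum_image (fun S hS T hT => hinj2 S hS T hT)]
  have hexp : As n k * (X - 1) = ∑ S ∈ Finset.powersetCard k (Finset.range n),
      ((X:Polynomial ℤ) ^ (∑ x ∈ S, x) * X - X ^ (∑ x ∈ S.image (fun x => (x + u0) % n), x)) := by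
    have hsplit : As n k * (X - 1) = As n k * X - As n k := by ring
    rw [hsplit]
    nth_rewrite 2 [hAs2]
    rw [As, Finset.sum_mul, ← Finset.sum_sub_distrib]
  rw [hexp]
  apply Finset.dvd_sum
  intro S hS
  have hcard : S.card = k := (Finset.mem_powersetCard.mp hS).2
  have h5 : ∑ x ∈ S.image (fun x => (x + u0) % n), x = ∑ x ∈ S, ((x + u0) % n) :=
    Finset.sum_image (hIO S hS)
  have h7 : ∑ x ∈ S, (x + u0) = (∑ x ∈ S, x) + k * u0 := by
    rw [Finset.sum_add_distrib, Finset.sum_const, hcard, smul_eq_mul]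
  have hme : (∑ x ∈ S, x) + 1 ≡ ∑ x ∈ S.image (fun x => (x + u0) % n), x [MOD n] := by
    rw [h5]
    have c1 : (∑ x ∈ S, ((x + u0) % n)) ≡ ∑ x ∈ S, (x + u0) [MOD n] :=
      (Finset.sum_nat_mod S n (fun x => x + u0)).symm
    have c2 : (∑ x ∈ S, x) + 1 ≡ (∑ x ∈ S, x) + k * u0 [MOD n] :=
      Nat.ModEq.add_left _ hmod.symm
    rw [← h7] at c2
    exact (c2.trans c1.symm)
  have hpow : (X:Polynomial ℤ) ^ (∑ x ∈ S, x) * X = X ^ ((∑ x ∈ S, x) + 1) := by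
    rw [pow_succ]
  rw [hpow]
  exact dvd_X_pow_sub_X_pow hme

end StringyAux

open StringyAux in
/-- For `1 < k < n-1` with `gcd(k,n) = 1`, the stringy E-function
`binom(n,k)_q·(q-1)·q^n/(q^n-1)` of the cone over `Gr(k,n)` is a polynomial with
nonnegative coefficients whose value at `q = 1` is `C(n,k)/n`. -/
theorem stringy_E_cone_grassmannian (n k : ℕ) (hk1 : 1 < k) (hkn : k < n - 1)
    (hcop : Nat.gcd k n = 1)
    (P : Polynomial ℤ) (hP : P * gaussDen k = gaussNum n k) :
    ∃ Q : Polynomial ℤ, Q * ((X : Polynomial ℤ) ^ n - 1) = P * (X - 1) * X ^ n ∧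
      (∀ i, 0 ≤ Q.coeff i) ∧ Q.eval 1 * (n : ℤ) = n.choose k := by
  classical
  have hn4 : 4 ≤ n := by omega
  have hkle : k ≤ n := by omega
  set w := n - k with hwdef
  have hw : n = w + k := by omega
  have hw2 : 2 ≤ w := by omega
  -- identify P with the multiset generating polynomial
  have hPG : P = G w k := by
    apply mul_right_cancel₀ (gaussDen_ne_zero k)
    rw [hP, G_mul_den w k, ← hw]
  have hev1 : P.eval 1 = (n.choose k : ℤ) := by
    rw [hPG, G_eval_one, ← hw]
  -- divisibility
  have hAsP : As n k = X ^ (stair k) * P := by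
    apply mul_right_cancel₀ (gaussDen_ne_zero k)
    rw [As_mul_den n k hkle, mul_assoc, hP]
  have hdvd0 : ((X:Polynomial ℤ)^n - 1) ∣ X ^ (stair k) * (P * (X - 1)) := by
    have := rot_dvd (n := n) (k := k) (by omega) hcop
    rw [hAsP] at this
    rw [show X ^ (stair k) * (P * (X - 1)) = X ^ (stair k) * P * (X - 1) from by ring]
    exact this
  have hcopX : IsCoprime ((X:Polynomial ℤ)^n - 1) (X ^ (stair k)) := by
    apply IsCoprime.pow_right
    refine ⟨-1, X^(n-1), ?_⟩
    have : (X:Polynomial ℤ)^(n-1) * X = X^n := by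
      rw [← pow_succ]
      congr 1
      omega
    rw [this]
    ring
  have hdvd : ((X:Polynomial ℤ)^n - 1) ∣ P * (X - 1) :=
    hcopX.dvd_of_dvd_mul_left hdvd0
  obtain ⟨Q', hQ'⟩ := hdvd
  -- the coefficient recurrence
  have hcoef : ∀ i : ℕ,
      (if n ≤ i then Q'.coeff (i - n) else 0) - Q'.coeff i
        = (if 1 ≤ i then P.coeff (i-1) else 0) - P.coeff i := by
    intro i
    have h := congrArg (fun p => Polynomial.coeff p i) hQ'
    have hL : (P * (X - 1)).coeff i
        = (if 1 ≤ i then P.coeff (i-1) else 0) - P.coeff i := by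
      rw [show P * ((X:Polynomial ℤ) - 1) = P * X^1 - P from by ring]
      rw [Polynomial.coeff_sub, Polynomial.coeff_mul_X_pow']
    have hR : (((X:Polynomial ℤ)^n - 1) * Q').coeff i
        = (if n ≤ i then Q'.coeff (i - n) else 0) - Q'.coeff i := by
      rw [show ((X:Polynomial ℤ)^n - 1) * Q' = Q' * X^n - Q' from by ring]
      rw [Polynomial.coeff_sub, Polynomial.coeff_mul_X_pow']
    rw [hL, hR] at h
    exact h.symm
  -- degree bound
  have hPdeg : P.natDegree ≤ k * w := by
    rw [Polynomial.natDegree_le_iff_coeff_eq_zero]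
    intro N hN
    rw [hPG]
    exact G_coeff_eq_zero hN
  have hQzero : ∀ j : ℕ, k * w + 1 < j + n → Q'.coeff j = 0 := by
    intro j hj
    by_cases hQ0 : Q' = 0
    · rw [hQ0, Polynomial.coeff_zero]
    · have hXn1 : ((X:Polynomial ℤ)^n - 1) ≠ 0 := by
        simpa using Polynomial.X_pow_sub_C_ne_zero (by omega : 0 < n) (1:ℤ)
      have hdR : (((X:Polynomial ℤ)^n - 1) * Q').natDegree = n + Q'.natDegree := by
        rw [Polynomial.natDegree_mul hXn1 hQ0]
        congr 1
        simpa using Polynomial.natDegree_X_pow_sub_C (n := n) (r := (1:ℤ))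
      have hdL : (P * ((X:Polynomial ℤ) - 1)).natDegree ≤ k * w + 1 := by
        apply le_trans (Polynomial.natDegree_mul_le)
        have h1 : ((X:Polynomial ℤ) - 1).natDegree ≤ 1 := by
          have := Polynomial.natDegree_sub_le (X:Polynomial ℤ) 1
          simpa using this
        omega
      rw [hQ', hdR] at hdL
      apply Polynomial.coeff_eq_zero_of_natDegree_lt
      omega
  -- nonnegativity of coefficients of Q'
  have hrecD : ∀ i : ℕ, Q'.coeff i
      = (if n ≤ i then Q'.coeff (i - n) else 0) + P.coeff i
        - (if 1 ≤ i then P.coeff (i-1) else 0) := by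
    intro i
    have := hcoef i
    linarith
  have hmono : ∀ j : ℕ, 2*j < k*w → P.coeff j ≤ P.coeff (j+1) := by
    intro j hj
    rw [hPG]
    exact G_mono hj
  have hanti : ∀ j : ℕ, k*w ≤ 2*j → P.coeff (j+1) ≤ P.coeff j := by
    intro j hj
    rw [hPG]
    exact G_anti hj
  have hpnn : ∀ j : ℕ, 0 ≤ P.coeff j := by
    intro j
    rw [hPG]
    exact G_coeff_nonneg w k j
  have hD : ∀ i : ℕ, 2*i ≤ k*w → 0 ≤ Q'.coeff i := by
    intro i
    induction i using Nat.strong_induction_on with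
    | _ i ih =>
      intro hi
      rw [hrecD i]
      have hrec_nonneg : 0 ≤ (if n ≤ i then Q'.coeff (i - n) else 0) := by
        by_cases hni : n ≤ i
        · rw [if_pos hni]
          exact ih (i - n) (by omega) (by omega)
        · rw [if_neg hni]
      have hstep : 0 ≤ P.coeff i - (if 1 ≤ i then P.coeff (i-1) else 0) := by
        by_cases h1i : 1 ≤ i
        · rw [if_pos h1i]
          have hb := hmono (i-1) (by omega)
          rw [show i - 1 + 1 = i from by omega] at hb
          linarith
        · rw [if_neg h1i]
          have := hpnn i
          linarith
      linarith
  have hU : ∀ fuel i : ℕ, k*w < 2*i → k*w + 2 ≤ i + fuel → 0 ≤ Q'.coeff i := by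
    intro fuel
    induction fuel with
    | zero =>
        intro i hi hfi
        rw [hQzero i (by omega)]
    | succ fuel ih =>
        intro i hi hfi
        by_cases hbig : k * w + 1 < i + n
        · rw [hQzero i hbig]
        · have hrec := hrecD (i + n)
          rw [if_pos (by omega : n ≤ i + n), if_pos (by omega : 1 ≤ i + n),
            show i + n - n = i from by omega] at hrec
          have h1 : 0 ≤ Q'.coeff (i+n) := ih (i+n) (by omega) (by omega)
          have h2 : P.coeff (i+n) ≤ P.coeff (i+n-1) := by
            have := hanti (i+n-1) (by omega)
            rw [show i + n - 1 + 1 = i + n from by omega] at this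
            exact this
          linarith
  have hQ'nn : ∀ i : ℕ, 0 ≤ Q'.coeff i := by
    intro i
    rcases le_or_gt (2*i) (k*w) with h | h
    · exact hD i h
    · exact hU (k*w + 2) i h (by omega)
  -- eval at 1
  have hX1ne : ((X:Polynomial ℤ) - 1) ≠ 0 := by
    intro hcon
    have := congrArg (Polynomial.eval 0) hcon
    simp at this
  have hPQ : P = Q' * (∑ i ∈ Finset.range n, (X:Polynomial ℤ)^i) := by
    apply mul_right_cancel₀ hX1ne
    rw [hQ', mul_assoc, geom_sum_mul]
    ring
  have hQev : Q'.eval 1 * (n:ℤ) = (n.choose k : ℤ) := by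
    rw [← hev1, hPQ]
    rw [Polynomial.eval_mul]
    congr 1
    rw [Polynomial.eval_finset_sum]
    simp
  -- final
  refine ⟨Q' * X^n, ?_, ?_, ?_⟩
  · rw [hQ']
    ring
  · intro i
    rw [Polynomial.coeff_mul_X_pow']
    split
    · exact hQ'nn _
    · exact le_refl 0
  · rw [Polynomial.eval_mul, Polynomial.eval_pow, Polynomial.eval_X, one_pow, mul_one]
    exact hQev
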